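/- Let λ ∈ ℝ \ {0}, α ∈ ℝ, ε ∈ {1, −1}, B = (−α+iε)/λ, β = 1 − λ. Define holomorphic vector fields on ℂ³: e1 = e^{λ z2}(1, 0, iε), e2 = (1,0,0), e3 = (0,0,1), e4 = (z1, 1, w), e5 = (w, B, −z1), e6 = e^{−λ z2}(1, 0, −iε). Then the following bracket identities hold: [e1,e4] = β e1, [e2,e4] = e2, [e3,e4] = e3, [e4,e6] = (β−2) e6, [e1,e5] = α e1, [e2,e5] = −e3, [e3,e5] = e2, [e4,e5] = 0, [e1,e2] = [e1,e3] = [e2,e3] = 0, [e1,e6] = [e2,e6] = [e3,e6] = 0. -/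

import Mathlib

open Complex

/-- Lie bracket of holomorphic vector fields on `ℂ³`, viewed as maps `ℂ³ → ℂ³`. -/
noncomputable def lieBrk (X Y : ℂ × ℂ × ℂ → ℂ × ℂ × ℂ) (p : ℂ × ℂ × ℂ) : ℂ × ℂ × ℂ :=
  fderiv ℂ Y p (X p) - fderiv ℂ X p (Y p)

noncomputable def S21 : (ℂ × ℂ × ℂ) →L[ℂ] ℂ :=
  (ContinuousLinearMap.fst ℂ ℂ ℂ).comp (ContinuousLinearMap.snd ℂ ℂ (ℂ × ℂ))

lemma fdexp (c a : ℂ) (p v : ℂ × ℂ × ℂ) :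
    fderiv ℂ (fun q : ℂ × ℂ × ℂ =>
      (Complex.exp (c * q.2.1), (0:ℂ), a * Complex.exp (c * q.2.1))) p v
      = (Complex.exp (c * p.2.1) * (c * v.2.1), 0,
          a * (Complex.exp (c * p.2.1) * (c * v.2.1))) := by
  have h0 : HasFDerivAt (fun q : ℂ × ℂ × ℂ => c * q.2.1) (c • S21) p := by
    exact HasFDerivAt.const_mul (S21.hasFDerivAt (x := p)) c
  have h1 := h0.cexp
  have h := HasFDerivAt.prodMk h1 (HasFDerivAt.prodMk (hasFDerivAt_const (0:ℂ) p) (HasFDerivAt.const_mul h1 a))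
  rw [h.fderiv]
  simp [S21, smul_eq_mul, mul_comm]

lemma fd4 (p v : ℂ × ℂ × ℂ) :
    fderiv ℂ (fun q : ℂ × ℂ × ℂ => (q.1, (1:ℂ), q.2.2)) p v = (v.1, 0, v.2.2) := by
  have h : HasFDerivAt (fun q : ℂ × ℂ × ℂ => (q.1, (1:ℂ), q.2.2))
      ((ContinuousLinearMap.fst ℂ ℂ (ℂ × ℂ)).prod (((0 : (ℂ × ℂ × ℂ) →L[ℂ] ℂ)).prod
        ((ContinuousLinearMap.snd ℂ ℂ ℂ).comp (ContinuousLinearMap.snd ℂ ℂ (ℂ × ℂ))))) p :=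
    HasFDerivAt.prodMk (hasFDerivAt_fst (p := p)) (HasFDerivAt.prodMk (hasFDerivAt_const (1:ℂ) p)
      (((ContinuousLinearMap.snd ℂ ℂ ℂ).comp (ContinuousLinearMap.snd ℂ ℂ (ℂ × ℂ))).hasFDerivAt (x := p)))
  rw [h.fderiv]; rfl

lemma fd5 (B : ℂ) (p v : ℂ × ℂ × ℂ) :
    fderiv ℂ (fun q : ℂ × ℂ × ℂ => (q.2.2, B, -q.1)) p v = (v.2.2, 0, -v.1) := by
  have h : HasFDerivAt (fun q : ℂ × ℂ × ℂ => (q.2.2, B, -q.1))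
      (((ContinuousLinearMap.snd ℂ ℂ ℂ).comp (ContinuousLinearMap.snd ℂ ℂ (ℂ × ℂ))).prod
        (((0 : (ℂ × ℂ × ℂ) →L[ℂ] ℂ)).prod (-(ContinuousLinearMap.fst ℂ ℂ (ℂ × ℂ))))) p :=
    HasFDerivAt.prodMk (((ContinuousLinearMap.snd ℂ ℂ ℂ).comp (ContinuousLinearMap.snd ℂ ℂ (ℂ × ℂ))).hasFDerivAt (x := p))
      (HasFDerivAt.prodMk (hasFDerivAt_const B p) (HasFDerivAt.neg (hasFDerivAt_fst (p := p))))
  rw [h.fderiv]; rfl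

/-- The second-case realization (6.18) of the algebras `g_{5,35}`, together with the extra
tangent field `e6`, satisfies the stated commutation relations. -/
theorem stmt13 (lam α ε : ℝ) (hlam : lam ≠ 0) (hε : ε = 1 ∨ ε = -1)
    (B : ℂ) (hB : B = (-(α : ℂ) + I * (ε : ℂ)) / (lam : ℂ))
    (β : ℝ) (hβ : β = 1 - lam)
    (e1 e2 e3 e4 e5 e6 : ℂ × ℂ × ℂ → ℂ × ℂ × ℂ)
    (he1 : e1 = fun p => (Complex.exp ((lam : ℂ) * p.2.1), 0,
        I * (ε : ℂ) * Complex.exp ((lam : ℂ) * p.2.1)))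
    (he2 : e2 = fun _ => (1, 0, 0))
    (he3 : e3 = fun _ => (0, 0, 1))
    (he4 : e4 = fun p => (p.1, 1, p.2.2))
    (he5 : e5 = fun p => (p.2.2, B, -p.1))
    (he6 : e6 = fun p => (Complex.exp (-(lam : ℂ) * p.2.1), 0,
        -I * (ε : ℂ) * Complex.exp (-(lam : ℂ) * p.2.1))) :
    (∀ p, lieBrk e1 e4 p = (β : ℂ) • e1 p) ∧
    (∀ p, lieBrk e2 e4 p = e2 p) ∧
    (∀ p, lieBrk e3 e4 p = e3 p) ∧
    (∀ p, lieBrk e4 e6 p = ((β : ℂ) - 2) • e6 p) ∧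
    (∀ p, lieBrk e1 e5 p = (α : ℂ) • e1 p) ∧
    (∀ p, lieBrk e2 e5 p = - e3 p) ∧
    (∀ p, lieBrk e3 e5 p = e2 p) ∧
    (∀ p, lieBrk e4 e5 p = 0) ∧
    (∀ p, lieBrk e1 e2 p = 0) ∧ (∀ p, lieBrk e1 e3 p = 0) ∧ (∀ p, lieBrk e2 e3 p = 0) ∧
    (∀ p, lieBrk e1 e6 p = 0) ∧ (∀ p, lieBrk e2 e6 p = 0) ∧ (∀ p, lieBrk e3 e6 p = 0) := by
  have hlamC : (lam : ℂ) ≠ 0 := by exact_mod_cast hlam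
  have hε2 : (ε : ℂ) * (ε : ℂ) = 1 := by
    rcases hε with h | h <;> subst h <;> norm_num
  have hε2' : (ε : ℂ) ^ 2 = 1 := by rw [sq]; exact hε2
  have hβC : (β : ℂ) = 1 - (lam : ℂ) := by rw [hβ]; push_cast; ring
  subst he1 he2 he3 he4 he5 he6 hB
  have hI : I * I = -1 := Complex.I_mul_I
  refine ⟨?_, ?_, ?_, ?_, ?_, ?_, ?_, ?_, ?_, ?_, ?_, ?_, ?_, ?_⟩ <;> intro p <;>
    simp only [lieBrk, fdexp, fd4, fd5, fderiv_const, fderiv_fun_const, Pi.zero_apply,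
      ContinuousLinearMap.zero_apply, Prod.mk.injEq, Prod.ext_iff, Prod.smul_fst,
      Prod.smul_snd, smul_eq_mul, Prod.fst_sub, Prod.snd_sub, Prod.fst_zero, Prod.snd_zero,
      hβC] <;>
    refine ⟨?_, ?_, ?_⟩ <;> (try field_simp) <;> ring_nf <;>
    simp [hI, hε2, hε2'] <;> ring_nf
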